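/- Let ρ : [0,1] → ℝ be positive and log-concave, and define J_ρ(x) = (∫₀ˣ ρ)(∫ₓ¹ ρ) / ((∫₀¹ ρ) ρ(x)). Then J_ρ(x) ≤ x(1-x) for all x ∈ (0,1). -/

import Mathlib

open Real Set intervalIntegral MeasureTheory

noncomputable def psi (t : ℝ) : ℝ := ∫ s in (0:ℝ)..1, Real.exp (t * s)

lemma psi_zero : psi 0 = 1 := by simp [psi]

lemma psi_pos (t : ℝ) : 0 < psi t := by
  apply intervalIntegral.intervalIntegral_pos_of_pos
  · exact (Real.continuous_exp.comp (by continuity)).intervalIntegrable 0 1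
  · exact fun s => Real.exp_pos _
  · norm_num

lemma Hexp (c d a b : ℝ) (hc : c ≠ 0) :
    (∫ t in a..b, Real.exp (c * t + d)) = (Real.exp (c * b + d) - Real.exp (c * a + d)) / c := by
  have h : ∀ t : ℝ, HasDerivAt (fun t => Real.exp (c * t + d) / c) (Real.exp (c * t + d)) t := by
    intro t
    have h1 : HasDerivAt (fun t : ℝ => c * t + d) c t := by
      simpa using ((hasDerivAt_id t).const_mul c).add_const d
    have h2 := h1.exp.div_const c
    rwa [mul_div_cancel_right₀ _ hc] at h2
  rw [intervalIntegral.integral_eq_sub_of_hasDerivAt (fun t _ => h t)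
    ((Real.continuous_exp.comp (by continuity)).intervalIntegrable a b)]
  ring

lemma psi_eq (t : ℝ) (ht : t ≠ 0) : psi t = (Real.exp t - 1) / t := by
  have h := Hexp t 0 0 1 ht
  simpa [psi] using h

lemma pointwise_cheb (a b s s₀ : ℝ) (hab : 0 ≤ a * b) :
    0 ≤ (Real.exp (a*s) - Real.exp (a*s₀)) * (Real.exp (b*s) - Real.exp (b*s₀)) := by
  have key : 0 ≤ (a*s - a*s₀) * (b*s - b*s₀) := by
    nlinarith [mul_nonneg hab (sq_nonneg (s - s₀))]
  rcases le_total (a*s) (a*s₀) with h1 | h1 <;> rcases le_total (b*s) (b*s₀) with h2 | h2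
  · nlinarith [sub_nonpos.2 (Real.exp_le_exp.2 h1), sub_nonpos.2 (Real.exp_le_exp.2 h2)]
  · have h0 : (a*s - a*s₀) * (b*s - b*s₀) ≤ 0 :=
      mul_nonpos_of_nonpos_of_nonneg (by linarith) (by linarith)
    have : (a*s - a*s₀) * (b*s - b*s₀) = 0 := le_antisymm h0 key
    rcases mul_eq_zero.1 this with h | h
    · have : a*s = a*s₀ := by linarith
      simp [this]
    · have : b*s = b*s₀ := by linarith
      simp [this]
  · have h0 : (a*s - a*s₀) * (b*s - b*s₀) ≤ 0 :=
      mul_nonpos_of_nonneg_of_nonpos (by linarith) (by linarith)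
    have : (a*s - a*s₀) * (b*s - b*s₀) = 0 := le_antisymm h0 key
    rcases mul_eq_zero.1 this with h | h
    · have : a*s = a*s₀ := by linarith
      simp [this]
    · have : b*s = b*s₀ := by linarith
      simp [this]
  · exact mul_nonneg (sub_nonneg.2 (Real.exp_le_exp.2 h1)) (sub_nonneg.2 (Real.exp_le_exp.2 h2))

lemma psi_mul_le (a b : ℝ) (hab : 0 ≤ a * b) : psi a * psi b ≤ psi (a + b) := by
  rcases eq_or_ne b 0 with hb | hb
  · simp [hb, psi_zero]
  · have hpb : 0 < psi b := psi_pos b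
    set s₀ := Real.log (psi b) / b with hs₀def
    have hbs₀ : b * s₀ = Real.log (psi b) := by
      rw [hs₀def]; field_simp
    have hs₀ : Real.exp (b * s₀) = psi b := by rw [hbs₀]; exact Real.exp_log hpb
    have cont : ∀ c : ℝ, Continuous fun s : ℝ => Real.exp (c * s) :=
      fun c => Real.continuous_exp.comp (continuous_const.mul continuous_id)
    have i1 : IntervalIntegrable (fun s => Real.exp ((a+b) * s)) volume 0 1 :=
      (cont _).intervalIntegrable 0 1
    have i2 : IntervalIntegrable (fun s => Real.exp (b*s₀) * Real.exp (a * s)) volume 0 1 :=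
      (continuous_const.mul (cont a)).intervalIntegrable 0 1
    have i3 : IntervalIntegrable (fun s => Real.exp (a*s₀) * Real.exp (b * s)) volume 0 1 :=
      (continuous_const.mul (cont b)).intervalIntegrable 0 1
    have hfun : ∀ s : ℝ, (Real.exp (a*s) - Real.exp (a*s₀)) * (Real.exp (b*s) - Real.exp (b*s₀))
        = Real.exp ((a+b)*s) - Real.exp (b*s₀) * Real.exp (a*s)
          - Real.exp (a*s₀) * Real.exp (b*s) + Real.exp (a*s₀) * Real.exp (b*s₀) := by
      intro s; rw [add_mul, Real.exp_add]; ring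
    have hint0 : (0:ℝ) ≤ ∫ s in (0:ℝ)..1,
        ((Real.exp (a*s) - Real.exp (a*s₀)) * (Real.exp (b*s) - Real.exp (b*s₀))) :=
      intervalIntegral.integral_nonneg (by norm_num) (fun s _ => pointwise_cheb a b s s₀ hab)
    simp only [hfun] at hint0
    rw [integral_add ((i1.sub i2).sub i3) intervalIntegrable_const,
        integral_sub (i1.sub i2) i3, integral_sub i1 i2,
        intervalIntegral.integral_const_mul, intervalIntegral.integral_const_mul, intervalIntegral.integral_const] at hint0
    simp only [smul_eq_mul, sub_zero, one_mul] at hint0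
    simp only [psi] at hs₀ ⊢
    rw [hs₀] at hint0
    linarith

lemma psi_neg (t : ℝ) : psi (-t) = Real.exp (-t) * psi t := by
  have h : (∫ s in (0:ℝ)..1, Real.exp (-t * (1 - s))) = ∫ s in (0:ℝ)..1, Real.exp (-t * s) := by
    have := intervalIntegral.integral_comp_sub_left (a := (0:ℝ)) (b := 1)
      (fun u => Real.exp (-t * u)) 1
    simpa using this
  have hfun : ∀ s : ℝ, Real.exp (-t * (1 - s)) = Real.exp (-t) * Real.exp (t * s) := by
    intro s; rw [← Real.exp_add]; congr 1; ring
  calc psi (-t) = ∫ s in (0:ℝ)..1, Real.exp (-t * s) := rfl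
    _ = ∫ s in (0:ℝ)..1, Real.exp (-t * (1 - s)) := h.symm
    _ = ∫ s in (0:ℝ)..1, Real.exp (-t) * Real.exp (t * s) := by simp only [hfun]
    _ = Real.exp (-t) * psi t := by rw [intervalIntegral.integral_const_mul]; rfl

lemma int1 (c x : ℝ) (hx : 0 < x) :
    (∫ t in (0:ℝ)..x, Real.exp (c*(t-x))) = x * psi (-(c*x)) := by
  rcases eq_or_ne c 0 with hc | hc
  · simp [hc, psi_zero]
  · have hfun : ∀ t : ℝ, Real.exp (c*(t-x)) = Real.exp (c*t + -(c*x)) := by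
      intro t; congr 1; ring
    simp only [hfun]
    rw [Hexp c (-(c*x)) 0 x hc, psi_eq _ (by simp [hc, hx.ne'] : -(c*x) ≠ 0)]
    have h1 : c*x + -(c*x) = 0 := by ring
    have h2 : c*0 + -(c*x) = -(c*x) := by ring
    rw [h1, h2, Real.exp_zero]
    field_simp
    ring

lemma int2 (c x : ℝ) (hx1 : x < 1) :
    (∫ t in x..(1:ℝ), Real.exp (c*(t-x))) = (1-x) * psi (c*(1-x)) := by
  rcases eq_or_ne c 0 with hc | hc
  · simp [hc, psi_zero]
  · have hfun : ∀ t : ℝ, Real.exp (c*(t-x)) = Real.exp (c*t + -(c*x)) := by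
      intro t; congr 1; ring
    simp only [hfun]
    have hcx : c*(1-x) ≠ 0 := by
      have : (1:ℝ) - x ≠ 0 := by linarith
      exact mul_ne_zero hc this
    rw [Hexp c (-(c*x)) x 1 hc, psi_eq _ hcx]
    have h1 : c*x + -(c*x) = 0 := by ring
    have h2 : c*1 + -(c*x) = c*(1-x) := by ring
    rw [h1, h2, Real.exp_zero]
    have h3 : (1:ℝ) - x ≠ 0 := by linarith
    field_simp

lemma int3 (c x : ℝ) :
    (∫ t in (0:ℝ)..1, Real.exp (c*(t-x))) = Real.exp (-(c*x)) * psi c := by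
  have hfun : ∀ t : ℝ, Real.exp (c*(t-x)) = Real.exp (-(c*x)) * Real.exp (c*t) := by
    intro t; rw [← Real.exp_add]; congr 1; ring
  simp only [hfun]
  rw [intervalIntegral.integral_const_mul]; rfl

lemma key_exp (c x : ℝ) (hx : 0 < x) (hx1 : x < 1) :
    (∫ t in (0:ℝ)..x, Real.exp (c*(t-x))) * (∫ t in x..(1:ℝ), Real.exp (c*(t-x)))
      ≤ x*(1-x) * (∫ t in (0:ℝ)..1, Real.exp (c*(t-x))) := by
  rw [int1 c x hx, int2 c x hx1, int3 c x]
  have h1 : (0:ℝ) < 1 - x := by linarith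
  have hab : 0 ≤ (c*x) * (c*(1-x)) := by nlinarith [mul_nonneg (mul_nonneg (sq_nonneg c) hx.le) h1.le]
  have hsuper := psi_mul_le (c*x) (c*(1-x)) hab
  have hsum : c*x + c*(1-x) = c := by ring
  rw [hsum] at hsuper
  rw [psi_neg (c*x)]
  have he : (0:ℝ) < Real.exp (-(c*x)) := Real.exp_pos _
  nlinarith [psi_pos (c*x), psi_pos (c*(1-x)), psi_pos c,
    mul_le_mul_of_nonneg_left hsuper (le_of_lt (mul_pos (mul_pos hx h1) he))]

theorem stmt0 (ρ : ℝ → ℝ)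
    (hcont : ContinuousOn ρ (Icc 0 1))
    (hpos : ∀ x ∈ Icc (0:ℝ) 1, 0 < ρ x)
    (hlc : ConcaveOn ℝ (Icc 0 1) (fun x => Real.log (ρ x))) :
    ∀ x ∈ Ioo (0:ℝ) 1,
      (∫ t in (0:ℝ)..x, ρ t) * (∫ t in x..(1:ℝ), ρ t) /
        ((∫ t in (0:ℝ)..(1:ℝ), ρ t) * ρ x) ≤ x * (1 - x) := by
  intro x hx
  obtain ⟨hx0, hx1⟩ := hx
  have hxmem : x ∈ Icc (0:ℝ) 1 := ⟨hx0.le, hx1.le⟩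
  have h0mem : (0:ℝ) ∈ Icc (0:ℝ) 1 := by norm_num
  set g : ℝ → ℝ := fun t => Real.log (ρ t) with hg
  -- supporting line
  set S : Set ℝ := (fun y => (g y - g x) / (y - x)) '' Ioc x 1 with hS
  have hne : S.Nonempty := ⟨_, ⟨1, ⟨hx1, le_refl 1⟩, rfl⟩⟩
  have hub : ∀ t ∈ Icc (0:ℝ) x, t < x → ∀ v ∈ S, v ≤ (g x - g t) / (x - t) := by
    intro t ht htx v hv
    obtain ⟨y, hy, rfl⟩ := hv
    have hymem : y ∈ Icc (0:ℝ) 1 := ⟨le_trans hx0.le hy.1.le, hy.2⟩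
    have htmem : t ∈ Icc (0:ℝ) 1 := ⟨ht.1, le_trans ht.2 hx1.le⟩
    have := hlc.slope_anti_adjacent htmem hymem htx hy.1
    simpa using this
  have hbdd : BddAbove S := by
    refine ⟨(g x - g 0) / (x - 0), ?_⟩
    intro v hv
    exact hub 0 ⟨le_refl 0, hx0.le⟩ hx0 v hv
  set c := sSup S with hc
  have hsupport : ∀ t ∈ Icc (0:ℝ) 1, g t ≤ g x + c * (t - x) := by
    intro t ht
    rcases lt_trichotomy t x with h | h | h
    · have hcle : c ≤ (g x - g t) / (x - t) := csSup_le hne (hub t ⟨ht.1, h.le⟩ h)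
      have hxt : (0:ℝ) < x - t := by linarith
      have := (le_div_iff₀ hxt).1 hcle
      linarith
    · subst h; simp
    · have hmem : (g t - g x) / (t - x) ∈ S := ⟨t, ⟨h, ht.2⟩, rfl⟩
      have hle : (g t - g x) / (t - x) ≤ c := le_csSup hbdd hmem
      have htx : (0:ℝ) < t - x := by linarith
      have := (div_le_iff₀ htx).1 hle
      linarith
  have hρx : 0 < ρ x := hpos x hxmem
  have hρbound : ∀ t ∈ Icc (0:ℝ) 1, ρ t ≤ ρ x * Real.exp (c * (t - x)) := by
    intro t ht
    have h1 := hsupport t ht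
    have h2 : ρ t = Real.exp (g t) := (Real.exp_log (hpos t ht)).symm
    have h3 : ρ x * Real.exp (c * (t - x)) = Real.exp (g x + c * (t - x)) := by
      rw [Real.exp_add]
      congr 1
      exact (Real.exp_log hρx).symm
    rw [h2, h3]
    exact Real.exp_le_exp.2 h1
  -- integrability
  have hIcc1 : Icc (0:ℝ) x ⊆ Icc 0 1 := Icc_subset_Icc (le_refl 0) hx1.le
  have hIcc2 : Icc x 1 ⊆ Icc (0:ℝ) 1 := Icc_subset_Icc hx0.le (le_refl 1)
  have i01 : IntervalIntegrable ρ volume 0 x := by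
    apply ContinuousOn.intervalIntegrable
    rw [uIcc_of_le hx0.le]
    exact hcont.mono hIcc1
  have ix1 : IntervalIntegrable ρ volume x 1 := by
    apply ContinuousOn.intervalIntegrable
    rw [uIcc_of_le hx1.le]
    exact hcont.mono hIcc2
  have contE : Continuous fun t : ℝ => Real.exp (c * (t - x)) :=
    Real.continuous_exp.comp (continuous_const.mul (continuous_id.sub continuous_const))
  have contB : Continuous fun t : ℝ => ρ x * Real.exp (c * (t - x)) :=
    continuous_const.mul contE
  -- bounds on the integrals
  set A := (∫ t in (0:ℝ)..x, ρ t) with hA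
  set B := (∫ t in x..(1:ℝ), ρ t) with hB
  set P := (∫ t in (0:ℝ)..x, Real.exp (c*(t-x))) with hP
  set Q := (∫ t in x..(1:ℝ), Real.exp (c*(t-x))) with hQ
  have hAle : A ≤ ρ x * P := by
    rw [hA, hP, ← intervalIntegral.integral_const_mul]
    apply intervalIntegral.integral_mono_on hx0.le i01 (contB.intervalIntegrable _ _)
    intro t ht
    exact hρbound t (hIcc1 ht)
  have hBle : B ≤ ρ x * Q := by
    rw [hB, hQ, ← intervalIntegral.integral_const_mul]
    apply intervalIntegral.integral_mono_on hx1.le ix1 (contB.intervalIntegrable _ _)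
    intro t ht
    exact hρbound t (hIcc2 ht)
  have hApos : 0 < A :=
    intervalIntegral.intervalIntegral_pos_of_pos_on i01
      (fun t ht => hpos t (hIcc1 (Ioo_subset_Icc_self ht))) hx0
  have hBpos : 0 < B :=
    intervalIntegral.intervalIntegral_pos_of_pos_on ix1
      (fun t ht => hpos t (hIcc2 (Ioo_subset_Icc_self ht))) hx1
  have hPpos : 0 < P :=
    intervalIntegral.intervalIntegral_pos_of_pos (contE.intervalIntegrable _ _)
      (fun t => Real.exp_pos _) hx0
  have hQpos : 0 < Q :=
    intervalIntegral.intervalIntegral_pos_of_pos (contE.intervalIntegrable _ _)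
      (fun t => Real.exp_pos _) hx1
  have hsplit : A + B = ∫ t in (0:ℝ)..(1:ℝ), ρ t :=
    intervalIntegral.integral_add_adjacent_intervals i01 ix1
  have hsplitE : P + Q = ∫ t in (0:ℝ)..(1:ℝ), Real.exp (c*(t-x)) :=
    intervalIntegral.integral_add_adjacent_intervals
      (contE.intervalIntegrable _ _) (contE.intervalIntegrable _ _)
  have hkey : P * Q ≤ x*(1-x) * (P + Q) := by
    rw [hsplitE]
    exact key_exp c x hx0 hx1
  have h1x : (0:ℝ) < 1 - x := by linarith
  -- monotonicity step
  have step1 : A * B * (ρ x * P + ρ x * Q) ≤ (ρ x * P) * (ρ x * Q) * (A + B) := by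
    nlinarith [mul_nonneg (mul_pos hApos (mul_pos hρx hPpos)).le (sub_nonneg.2 hBle),
      mul_nonneg (mul_pos hBpos (mul_pos hρx hQpos)).le (sub_nonneg.2 hAle)]
  have step2 : (ρ x * P) * (ρ x * Q) ≤ x*(1-x) * (ρ x * (ρ x * P + ρ x * Q)) := by
    nlinarith [mul_le_mul_of_nonneg_left hkey (mul_pos hρx hρx).le]
  have hSpos : (0:ℝ) < ρ x * P + ρ x * Q := by positivity
  have step3 : A * B ≤ x*(1-x) * ((A + B) * ρ x) := by
    have h2 := mul_le_mul_of_nonneg_right step2 (by positivity : (0:ℝ) ≤ A + B)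
    apply le_of_mul_le_mul_right _ hSpos
    nlinarith [step1, h2]
  rw [← hsplit, div_le_iff₀ (by positivity : (0:ℝ) < (A + B) * ρ x)]
  exact step3
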